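/- Cumulative posterior standard deviation under a Matérn-type information-gain bound, case d = ν: assume k(x, x) ≤ 1 for all x ∈ X, that the Matérn-type information-gain hypothesis holds, and that d = ν. Then for every T ∈ ℕ₊ and every sequence x₁, …, x_T ∈ X, ∑_{t=1}^T σ(x_t; X_{t−1}) ≤ T̄_Mat + C̃_Mat^{1/2} · (ln T)². -/

import Mathlib

open Matrix

noncomputable section

/-- Gram matrix `K = [k(x_i, x_j)]` of the kernel `k` on the finite family `xs`. -/
def gram {X ι : Type*} [Fintype ι] (k : X → X → ℝ) (xs : ι → X) :
    Matrix ι ι ℝ := fun i j => k (xs i) (xs j)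

/-- Kernel vector `k_t(x) = (k(x₁, x), …, k(x_t, x))`. -/
def kvec {X ι : Type*} [Fintype ι] (k : X → X → ℝ) (xs : ι → X) (x : X) :
    ι → ℝ := fun i => k (xs i) x

/-- Regularized posterior variance `σ²_{λ²}(x; xs) = k(x,x) - k_t(x)ᵀ (K + λ² I)⁻¹ k_t(x)`.
For the empty family this is `k(x,x)`. -/
def postVar {X ι : Type*} [Fintype ι] [DecidableEq ι] (k : X → X → ℝ)
    (xs : ι → X) (lam : ℝ) (x : X) : ℝ :=
  k x x - kvec k xs x ⬝ᵥ ((gram k xs + lam ^ 2 • (1 : Matrix ι ι ℝ))⁻¹ *ᵥ kvec k xs x)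

/-- Noise-free posterior standard deviation `σ(x; xs) = inf_{λ > 0} σ_{λ²}(x; xs)`. -/
def postStd {X ι : Type*} [Fintype ι] [DecidableEq ι] (k : X → X → ℝ)
    (xs : ι → X) (x : X) : ℝ :=
  ⨅ lam : {l : ℝ // 0 < l}, Real.sqrt (postVar k xs lam.1 x)

/-- Maximum information gain `γ_T(λ²) = sup_{x₁,…,x_T} (1/2) ln det (I_T + λ⁻² K_T)`,
a value in `[0, ∞]`. -/
def mig {X : Type*} (k : X → X → ℝ) (T : ℕ) (lam : ℝ) : ENNReal :=
  ⨆ xs : Fin T → X, ENNReal.ofReal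
    ((1 / 2) * Real.log ((1 + (lam ^ 2)⁻¹ • gram k xs).det))

/-- The prefix `X_{t-1} = (x₁, …, x_{t-1})` of a finite sequence (`t` is 0-indexed). -/
def pre {X : Type*} {T : ℕ} (xs : Fin T → X) (t : Fin T) : Fin t.1 → X :=
  fun i => xs ⟨i.1, i.2.trans t.2⟩

/-- Noise-free posterior mean `μ(x; xs) = k_t(x)ᵀ K⁻¹ (f(x₁), …, f(x_t))ᵀ`
(for the empty family this is `0`). -/
def postMean {X ι : Type*} [Fintype ι] [DecidableEq ι] (k : X → X → ℝ)
    (xs : ι → X) (f : X → ℝ) (x : X) : ℝ :=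
  kvec k xs x ⬝ᵥ ((gram k xs)⁻¹ *ᵥ fun i => f (xs i))

/-- Noise-free posterior standard deviation in closed form,
`σ(x; xs) = (k(x,x) - k_t(x)ᵀ K⁻¹ k_t(x))^{1/2}` (for the empty family, `k(x,x)^{1/2}`). -/
def postStdInv {X ι : Type*} [Fintype ι] [DecidableEq ι] (k : X → X → ℝ)
    (xs : ι → X) (x : X) : ℝ :=
  Real.sqrt (k x x - kvec k xs x ⬝ᵥ ((gram k xs)⁻¹ *ᵥ kvec k xs x))

/-- The first `t` points `X_t = (x₁, …, x_t)` of an infinite sequence. -/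
def prefN {X : Type*} (xseq : ℕ → X) (t : ℕ) : Fin t → X := fun i => xseq i

section LA
variable {X : Type*} {k : X → X → ℝ}



lemma gram_quad_nonneg
    (hpsd : ∀ (n : ℕ) (xv : Fin n → X) (c : Fin n → ℝ),
      0 ≤ ∑ i, ∑ j, c i * c j * k (xv i) (xv j))
    {n : ℕ} (u : Fin n → X) (c : Fin n → ℝ) :
    0 ≤ c ⬝ᵥ (gram k u *ᵥ c) := by
  have h := hpsd n u c
  have : c ⬝ᵥ (gram k u *ᵥ c) = ∑ i, ∑ j, c i * c j * k (u i) (u j) := by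
    simp only [dotProduct, mulVec, _root_.gram, Finset.mul_sum]
    exact Finset.sum_congr rfl fun i _ => Finset.sum_congr rfl fun j _ => by ring
  rw [this]; exact h

lemma regmat_posdef
    (hpsd : ∀ (n : ℕ) (xv : Fin n → X) (c : Fin n → ℝ),
      0 ≤ ∑ i, ∑ j, c i * c j * k (xv i) (xv j))
    (hsym : ∀ x y : X, k x y = k y x)
    {n : ℕ} (u : Fin n → X) {lam : ℝ} (hlam : lam ≠ 0) :
    (gram k u + lam ^ 2 • (1 : Matrix (Fin n) (Fin n) ℝ)).PosDef := by
  rw [Matrix.posDef_iff_dotProduct_mulVec]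
  constructor
  · unfold Matrix.IsHermitian
    ext i j
    simp [Matrix.conjTranspose_apply, _root_.gram, Matrix.one_apply, hsym (u j) (u i)]
    rcases eq_or_ne i j with h | h
    · simp [h]
    · simp [h, Ne.symm h]
  · intro x hx
    have h1 : (gram k u + lam ^ 2 • (1 : Matrix (Fin n) (Fin n) ℝ)) *ᵥ x
        = gram k u *ᵥ x + lam ^ 2 • x := by
      rw [Matrix.add_mulVec, Matrix.smul_mulVec, Matrix.one_mulVec]
    rw [show star x = x from star_trivial x, h1, dotProduct_add, dotProduct_smul]
    have h2 : 0 < x ⬝ᵥ x := by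
      have := (dotProduct_star_self_pos_iff (v := x)).2 hx
      simpa using this
    have h3 := gram_quad_nonneg hpsd u x
    have h4 : (0:ℝ) < lam ^ 2 := by positivity
    have : (0:ℝ) < lam ^ 2 * (x ⬝ᵥ x) := mul_pos h4 h2
    simp only [smul_eq_mul]
    linarith

lemma quad_le_inv {n : ℕ} {A : Matrix (Fin n) (Fin n) ℝ} (hA : A.PosDef)
    (b w : Fin n → ℝ) :
    2 * (w ⬝ᵥ b) - w ⬝ᵥ (A *ᵥ w) ≤ b ⬝ᵥ (A⁻¹ *ᵥ b) := by
  have hdet : IsUnit A.det := isUnit_iff_ne_zero.2 (ne_of_gt hA.det_pos)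
  have hAA : A * A⁻¹ = 1 := Matrix.mul_nonsing_inv A hdet
  set ws : Fin n → ℝ := A⁻¹ *ᵥ b with hws
  have hAws : A *ᵥ ws = b := by
    rw [hws, Matrix.mulVec_mulVec, hAA, Matrix.one_mulVec]
  have hsymA : Aᵀ = A := by
    have := hA.1
    rwa [Matrix.IsHermitian, Matrix.conjTranspose_eq_transpose_of_trivial] at this
  have hcross : ∀ v1 v2 : Fin n → ℝ, v1 ⬝ᵥ (A *ᵥ v2) = v2 ⬝ᵥ (A *ᵥ v1) := by
    intro v1 v2
    rw [Matrix.dotProduct_mulVec, ← hsymA, Matrix.vecMul_transpose, hsymA, dotProduct_comm]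
  have hq : 0 ≤ (w - ws) ⬝ᵥ (A *ᵥ (w - ws)) := by
    rcases eq_or_ne (w - ws) 0 with h | h
    · simp [h]
    · have := hA.dotProduct_mulVec_pos h
      rw [show star (w - ws) = w - ws from star_trivial _] at this
      exact this.le
  have hexp : (w - ws) ⬝ᵥ (A *ᵥ (w - ws))
      = w ⬝ᵥ (A *ᵥ w) - 2 * (w ⬝ᵥ b) + b ⬝ᵥ (A⁻¹ *ᵥ b) := by
    rw [Matrix.mulVec_sub, dotProduct_sub, sub_dotProduct, sub_dotProduct]
    have e1 : w ⬝ᵥ (A *ᵥ ws) = w ⬝ᵥ b := by rw [hAws]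
    have e2 : ws ⬝ᵥ (A *ᵥ w) = w ⬝ᵥ b := by rw [hcross, hAws]
    have e3 : ws ⬝ᵥ (A *ᵥ ws) = b ⬝ᵥ (A⁻¹ *ᵥ b) := by
      rw [hAws, hws, dotProduct_comm]
    rw [e1, e2, e3]; ring
  linarith [hq, hexp.symm.le, hexp.le]

lemma inv_quad_eq {n : ℕ} {A : Matrix (Fin n) (Fin n) ℝ} (hA : A.PosDef)
    (b : Fin n → ℝ) :
    2 * ((A⁻¹ *ᵥ b) ⬝ᵥ b) - (A⁻¹ *ᵥ b) ⬝ᵥ (A *ᵥ (A⁻¹ *ᵥ b)) = b ⬝ᵥ (A⁻¹ *ᵥ b) := by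
  have hdet : IsUnit A.det := isUnit_iff_ne_zero.2 (ne_of_gt hA.det_pos)
  have hAA : A * A⁻¹ = 1 := Matrix.mul_nonsing_inv A hdet
  have hAws : A *ᵥ (A⁻¹ *ᵥ b) = b := by
    rw [Matrix.mulVec_mulVec, hAA, Matrix.one_mulVec]
  rw [hAws, dotProduct_comm]
  ring

end LA

section PV
variable {X : Type*} {k : X → X → ℝ}

variable (hpsd : ∀ (n : ℕ) (xv : Fin n → X) (c : Fin n → ℝ),
      0 ≤ ∑ i, ∑ j, c i * c j * k (xv i) (xv j))
    (hsym : ∀ x y : X, k x y = k y x)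

include hpsd hsym

lemma postVar_le_kxx {n : ℕ} (u : Fin n → X) {lam : ℝ} (hlam : lam ≠ 0) (x : X) :
    postVar k u lam x ≤ k x x := by
  have hA := regmat_posdef hpsd hsym u hlam
  have h := quad_le_inv hA (kvec k u x) 0
  simp only [zero_dotProduct, Matrix.mulVec_zero, dotProduct_zero, mul_zero, sub_zero] at h
  unfold postVar
  linarith

lemma bordered_quad {n : ℕ} (u : Fin n → X) (x : X) (w : Fin n → ℝ) :
    2 * (w ⬝ᵥ kvec k u x) - w ⬝ᵥ (gram k u *ᵥ w) ≤ k x x := by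
  set c : Fin (n+1) → ℝ := Fin.snoc (fun i => -(w i)) 1 with hc
  set d : Fin (n+1) → X := Fin.snoc u x with hd
  have h := hpsd (n+1) d c
  rw [Fin.sum_univ_castSucc] at h
  have e1 : ∀ i : Fin n, ∑ j : Fin (n+1),
      c (Fin.castSucc i) * c j * k (d (Fin.castSucc i)) (d j)
      = (∑ j : Fin n, w i * w j * k (u i) (u j)) - w i * k (u i) x := by
    intro i
    rw [Fin.sum_univ_castSucc]
    simp only [hc, hd, Fin.snoc_castSucc, Fin.snoc_last]
    congr 1
    · exact Finset.sum_congr rfl fun j _ => by ring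
    · ring
  have e2 : ∑ j : Fin (n+1),
      c (Fin.last n) * c j * k (d (Fin.last n)) (d j)
      = -(∑ j : Fin n, w j * k (u j) x) + k x x := by
    rw [Fin.sum_univ_castSucc]
    simp only [hc, hd, Fin.snoc_castSucc, Fin.snoc_last]
    congr 1
    · rw [← Finset.sum_neg_distrib]
      exact Finset.sum_congr rfl fun j _ => by rw [hsym x (u j)]; ring
    · ring
  rw [Finset.sum_congr rfl (fun i _ => e1 i), e2, Finset.sum_sub_distrib] at h
  have hd1 : w ⬝ᵥ (gram k u *ᵥ w) = ∑ i, ∑ j, w i * w j * k (u i) (u j) := by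
    simp only [dotProduct, mulVec, _root_.gram, Finset.mul_sum]
    exact Finset.sum_congr rfl fun i _ => Finset.sum_congr rfl fun j _ => by ring
  have hd2 : w ⬝ᵥ kvec k u x = ∑ i, w i * k (u i) x := by
    simp only [dotProduct, kvec]
  rw [hd1, hd2]
  linarith

lemma postVar_nonneg {n : ℕ} (u : Fin n → X) {lam : ℝ} (hlam : lam ≠ 0) (x : X) :
    0 ≤ postVar k u lam x := by
  have hA := regmat_posdef hpsd hsym u hlam
  set A := gram k u + lam ^ 2 • (1 : Matrix (Fin n) (Fin n) ℝ) with hAdef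
  set b := kvec k u x with hbdef
  set ws : Fin n → ℝ := A⁻¹ *ᵥ b with hws
  have heq := inv_quad_eq hA b
  have hsmul : A *ᵥ ws = gram k u *ᵥ ws + lam ^ 2 • ws := by
    rw [hAdef, Matrix.add_mulVec, Matrix.smul_mulVec, Matrix.one_mulVec]
  have hkey : b ⬝ᵥ (A⁻¹ *ᵥ b) ≤ 2 * (ws ⬝ᵥ b) - ws ⬝ᵥ (gram k u *ᵥ ws) := by
    rw [← heq]
    have : ws ⬝ᵥ (A *ᵥ ws) = ws ⬝ᵥ (gram k u *ᵥ ws) + lam ^ 2 * (ws ⬝ᵥ ws) := by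
      rw [hsmul, dotProduct_add, dotProduct_smul, smul_eq_mul]
    rw [this]
    have h1 : 0 ≤ lam ^ 2 * (ws ⬝ᵥ ws) := by
      apply mul_nonneg (by positivity)
      have := (dotProduct_star_self_nonneg ws); simpa using this
    linarith
  have hb := bordered_quad hpsd hsym u x ws
  have hwb : ws ⬝ᵥ b = ws ⬝ᵥ kvec k u x := rfl
  unfold postVar
  rw [← hAdef, ← hbdef]
  linarith

lemma postVar_mono {p q : ℕ} (u : Fin p → X) (v : Fin q → X)
    (φ : Fin p → Fin q) (hinj : Function.Injective φ) (hcomp : ∀ i, v (φ i) = u i)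
    {lam : ℝ} (hlam : lam ≠ 0) (x : X) :
    postVar k v lam x ≤ postVar k u lam x := by
  classical
  have hAu := regmat_posdef hpsd hsym u hlam
  have hAv := regmat_posdef hpsd hsym v hlam
  set Au := gram k u + lam ^ 2 • (1 : Matrix (Fin p) (Fin p) ℝ) with hAudef
  set Av := gram k v + lam ^ 2 • (1 : Matrix (Fin q) (Fin q) ℝ) with hAvdef
  set bu := kvec k u x with hbu
  set bv := kvec k v x with hbv
  set w : Fin p → ℝ := Au⁻¹ *ᵥ bu with hw
  set w' : Fin q → ℝ := fun j => ∑ i ∈ Finset.univ.filter (fun i => φ i = j), w i with hw'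
  -- fiberwise sum identities
  have hfib : ∀ f : Fin p → ℝ, (∑ j : Fin q, ∑ i ∈ Finset.univ.filter (fun i => φ i = j), f i)
      = ∑ i : Fin p, f i := fun f => Finset.sum_fiberwise _ _ _
  have c1 : w' ⬝ᵥ bv = w ⬝ᵥ bu := by
    simp only [dotProduct, hw']
    rw [← hfib (fun i => w i * bu i)]
    apply Finset.sum_congr rfl
    intro j _
    rw [Finset.sum_mul]
    apply Finset.sum_congr rfl
    intro i hi
    have hφ : φ i = j := (Finset.mem_filter.mp hi).2
    congr 1
    rw [hbv, hbu, kvec, kvec, ← hφ, hcomp i]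
  have c2 : w' ⬝ᵥ (gram k v *ᵥ w') = w ⬝ᵥ (gram k u *ᵥ w) := by
    have inner : ∀ j : Fin q, (gram k v *ᵥ w') j = ∑ i' : Fin p, k (v j) (u i') * w i' := by
      intro j
      simp only [mulVec, dotProduct, hw', Finset.mul_sum]
      rw [← hfib (fun i' => k (v j) (u i') * w i')]
      apply Finset.sum_congr rfl
      intro j' _
      apply Finset.sum_congr rfl
      intro i' hi'
      have hφ : φ i' = j' := (Finset.mem_filter.mp hi').2
      congr 1
      rw [_root_.gram, ← hφ, hcomp i']
    simp only [dotProduct, hw']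
    rw [← hfib (fun i => w i * (gram k u *ᵥ w) i)]
    apply Finset.sum_congr rfl
    intro j _
    rw [Finset.sum_mul]
    apply Finset.sum_congr rfl
    intro i hi
    have hφ : φ i = j := (Finset.mem_filter.mp hi).2
    rw [inner j, ← hφ]
    simp only [hcomp i]
    simp only [mulVec, dotProduct, _root_.gram, Finset.mul_sum]
  have c3 : w' ⬝ᵥ w' = w ⬝ᵥ w := by
    simp only [dotProduct, hw']
    rw [← hfib (fun i => w i * w i)]
    apply Finset.sum_congr rfl
    intro j _
    rw [Finset.sum_mul]
    apply Finset.sum_congr rfl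
    intro i hi
    have hφ : φ i = j := (Finset.mem_filter.mp hi).2
    congr 1
    have : Finset.univ.filter (fun i' => φ i' = j) = {i} := by
      ext i'
      simp only [Finset.mem_filter, Finset.mem_univ, true_and, Finset.mem_singleton, ← hφ]
      exact ⟨fun h => hinj h, fun h => h ▸ rfl⟩
    rw [this, Finset.sum_singleton]
  have hAvm : ∀ z : Fin q → ℝ, z ⬝ᵥ (Av *ᵥ z) = z ⬝ᵥ (gram k v *ᵥ z) + lam ^ 2 * (z ⬝ᵥ z) := by
    intro z
    rw [hAvdef, Matrix.add_mulVec, Matrix.smul_mulVec, Matrix.one_mulVec,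
      dotProduct_add, dotProduct_smul, smul_eq_mul]
  have hAum : w ⬝ᵥ (Au *ᵥ w) = w ⬝ᵥ (gram k u *ᵥ w) + lam ^ 2 * (w ⬝ᵥ w) := by
    rw [hAudef, Matrix.add_mulVec, Matrix.smul_mulVec, Matrix.one_mulVec,
      dotProduct_add, dotProduct_smul, smul_eq_mul]
  have hle := quad_le_inv hAv bv w'
  have heq := inv_quad_eq hAu bu
  have hwbu : w ⬝ᵥ bu = bu ⬝ᵥ w := dotProduct_comm _ _
  -- 2 w' bv - w' Av w' = 2 w bu - w Au w = bu Au⁻¹ bu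
  have hchain : bu ⬝ᵥ (Au⁻¹ *ᵥ bu) ≤ bv ⬝ᵥ (Av⁻¹ *ᵥ bv) := by
    calc bu ⬝ᵥ (Au⁻¹ *ᵥ bu) = 2 * (w ⬝ᵥ bu) - w ⬝ᵥ (Au *ᵥ w) := by
          rw [← heq]
      _ = 2 * (w' ⬝ᵥ bv) - w' ⬝ᵥ (Av *ᵥ w') := by
          rw [hAvm w', hAum, c1, c2, c3]
      _ ≤ bv ⬝ᵥ (Av⁻¹ *ᵥ bv) := hle
  unfold postVar
  rw [← hAudef, ← hAvdef, ← hbu, ← hbv]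
  linarith

end PV

section STD
variable {X : Type*} {k : X → X → ℝ}

lemma postStd_le_sqrt {n : ℕ} (u : Fin n → X) (x : X) {lam : ℝ} (hlam : 0 < lam) :
    postStd k u x ≤ Real.sqrt (postVar k u lam x) := by
  apply ciInf_le ⟨0, ?_⟩ (⟨lam, hlam⟩ : {l : ℝ // 0 < l})
  rintro y ⟨l, rfl⟩
  exact Real.sqrt_nonneg _

lemma postStd_nonneg {n : ℕ} (u : Fin n → X) (x : X) :
    0 ≤ postStd k u x :=
  le_ciInf fun l => Real.sqrt_nonneg _

lemma postStd_le_one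
    (hpsd : ∀ (n : ℕ) (xv : Fin n → X) (c : Fin n → ℝ),
      0 ≤ ∑ i, ∑ j, c i * c j * k (xv i) (xv j))
    (hsym : ∀ x y : X, k x y = k y x)
    (hk1 : ∀ x : X, k x x ≤ 1)
    {n : ℕ} (u : Fin n → X) (x : X) :
    postStd k u x ≤ 1 := by
  have h1 : postVar k u 1 x ≤ 1 := le_trans (postVar_le_kxx hpsd hsym u one_ne_zero x) (hk1 x)
  calc postStd k u x ≤ Real.sqrt (postVar k u 1 x) := postStd_le_sqrt u x one_pos
    _ ≤ Real.sqrt 1 := Real.sqrt_le_sqrt h1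
    _ = 1 := Real.sqrt_one

end STD

section DET
variable {X : Type*} {k : X → X → ℝ}
variable (hpsd : ∀ (n : ℕ) (xv : Fin n → X) (c : Fin n → ℝ),
      0 ≤ ∑ i, ∑ j, c i * c j * k (xv i) (xv j))
    (hsym : ∀ x y : X, k x y = k y x)
include hpsd hsym

lemma det_succ {m : ℕ} (v : Fin (m+1) → X) {lam : ℝ} (hlam : lam ≠ 0) :
    (gram k v + lam ^ 2 • (1 : Matrix (Fin (m+1)) (Fin (m+1)) ℝ)).det
    = (gram k (v ∘ Fin.castSucc) + lam ^ 2 • (1 : Matrix (Fin m) (Fin m) ℝ)).det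
      * (lam ^ 2 + postVar k (v ∘ Fin.castSucc) lam (v (Fin.last m))) := by
  classical
  set A := gram k (v ∘ Fin.castSucc) + lam ^ 2 • (1 : Matrix (Fin m) (Fin m) ℝ) with hA
  have hPD := regmat_posdef hpsd hsym (v ∘ Fin.castSucc) hlam
  rw [← hA] at hPD
  have hdet : IsUnit A.det := isUnit_iff_ne_zero.2 (ne_of_gt hPD.det_pos)
  have hInv : Invertible A := A.invertibleOfIsUnitDet hdet
  set B : Matrix (Fin m) (Fin 1) ℝ :=
    Matrix.of (fun i _ => k (v (Fin.castSucc i)) (v (Fin.last m))) with hB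
  set C : Matrix (Fin 1) (Fin m) ℝ :=
    Matrix.of (fun _ i => k (v (Fin.last m)) (v (Fin.castSucc i))) with hC
  set D : Matrix (Fin 1) (Fin 1) ℝ :=
    Matrix.of (fun _ _ => k (v (Fin.last m)) (v (Fin.last m)) + lam ^ 2) with hD
  have e : Fin m ⊕ Fin 1 ≃ Fin (m+1) := finSumFinEquiv
  have hsub : ((gram k v + lam ^ 2 • (1 : Matrix (Fin (m+1)) (Fin (m+1)) ℝ)).submatrix
      finSumFinEquiv (finSumFinEquiv (m := m) (n := 1))) = Matrix.fromBlocks A B C D := by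
    have hnat : ∀ jj : Fin 1, Fin.natAdd m jj = Fin.last m := by
      intro jj
      apply Fin.ext
      simp [Fin.last]
    have hne1 : ∀ ii : Fin m, (Fin.castSucc ii = Fin.last m) = False :=
      fun ii => eq_false (Fin.ne_of_lt (Fin.castSucc_lt_last ii))
    have hne2 : ∀ ii : Fin m, (Fin.last m = Fin.castSucc ii) = False :=
      fun ii => eq_false (Fin.ne_of_lt (Fin.castSucc_lt_last ii)).symm
    have hcc : ∀ ii : Fin m, Fin.castAdd 1 ii = Fin.castSucc ii := fun _ => rfl
    ext i j
    rcases i with i | i <;> rcases j with j | j <;>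
      simp [Matrix.submatrix_apply, finSumFinEquiv_apply_left, finSumFinEquiv_apply_right,
        hnat, hcc, hne1, hne2, Fin.castSucc_inj,
        Matrix.fromBlocks_apply₁₁, Matrix.fromBlocks_apply₁₂, Matrix.fromBlocks_apply₂₁,
        Matrix.fromBlocks_apply₂₂, hA, hB, hC, hD, Matrix.add_apply, Matrix.smul_apply,
        Matrix.one_apply, _root_.gram, Matrix.of_apply, Function.comp_apply, smul_eq_mul]
  have hdetm : (gram k v + lam ^ 2 • (1 : Matrix (Fin (m+1)) (Fin (m+1)) ℝ)).det
      = (Matrix.fromBlocks A B C D).det := by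
    rw [← hsub, Matrix.det_submatrix_equiv_self]
  rw [hdetm, Matrix.det_fromBlocks₁₁]
  congr 1
  rw [Matrix.det_fin_one]
  have hInvOf : (⅟A : Matrix (Fin m) (Fin m) ℝ) = A⁻¹ := Matrix.invOf_eq_nonsing_inv A
  rw [Matrix.sub_apply, hInvOf]
  have hmul : (C * A⁻¹ * B) 0 0
      = kvec k (v ∘ Fin.castSucc) (v (Fin.last m)) ⬝ᵥ
        (A⁻¹ *ᵥ kvec k (v ∘ Fin.castSucc) (v (Fin.last m))) := by
    rw [Matrix.mul_assoc, Matrix.mul_apply]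
    simp only [dotProduct, mulVec, Matrix.mul_apply]
    apply Finset.sum_congr rfl
    intro i _
    simp only [hC, hB, Matrix.of_apply, kvec, Function.comp_apply, dotProduct]
    rw [hsym (v (Fin.last m)) (v (Fin.castSucc i))]
  rw [hmul]
  simp only [hD, Matrix.of_apply, postVar, ← hA]
  ring

lemma det_lower {m : ℕ} (v : Fin m → X) {lam : ℝ} (hlam : lam ≠ 0)
    (hvar : ∀ j : Fin m, lam ^ 2 < postVar k (fun l : Fin j.1 => v ⟨l.1, l.2.trans j.2⟩) lam (v j)) :
    (2 * lam ^ 2) ^ m ≤ (gram k v + lam ^ 2 • (1 : Matrix (Fin m) (Fin m) ℝ)).det := by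
  induction m with
  | zero => simp [Matrix.det_fin_zero]
  | succ m ih =>
    rw [det_succ hpsd hsym v hlam]
    have hpre : ∀ j : Fin m,
        lam ^ 2 < postVar k
          (fun l : Fin j.1 => (v ∘ Fin.castSucc) ⟨l.1, l.2.trans j.2⟩) lam ((v ∘ Fin.castSucc) j) := by
      intro j
      have := hvar (Fin.castSucc j)
      exact this
    have hih := ih (v ∘ Fin.castSucc) hpre
    have hlast := hvar (Fin.last m)
    have hlast' : lam ^ 2 < postVar k (v ∘ Fin.castSucc) lam (v (Fin.last m)) := by
      have hfun : (fun l : Fin (Fin.last m).1 => v ⟨l.1, l.2.trans (Fin.last m).2⟩)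
          = v ∘ Fin.castSucc := by
        funext l
        rfl
      rwa [hfun] at hlast
    have h2 : (0:ℝ) < 2 * lam ^ 2 := by positivity
    calc (2 * lam ^ 2) ^ (m+1) = (2 * lam ^ 2) ^ m * (2 * lam ^ 2) := by ring
      _ ≤ (gram k (v ∘ Fin.castSucc) + lam ^ 2 • (1 : Matrix (Fin m) (Fin m) ℝ)).det
            * (lam ^ 2 + postVar k (v ∘ Fin.castSucc) lam (v (Fin.last m))) := by
          apply mul_le_mul hih (by linarith) (le_of_lt h2) (le_trans (pow_nonneg h2.le m) hih)

end DET

section COUNT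
variable {X : Type*} {k : X → X → ℝ}

lemma log_ge_one' {i : ℕ} (hi : 3 ≤ i) : 1 ≤ Real.log i := by
  rw [Real.le_log_iff_exp_le (by positivity)]
  calc Real.exp 1 ≤ 2.7182818286 := (Real.exp_one_lt_d9).le
    _ ≤ 3 := by norm_num
    _ ≤ (i:ℝ) := by exact_mod_cast hi

lemma gain_arith {CMat Ctil : ℝ} (hC : 0 < CMat) (hCt1 : 1 ≤ Ctil)
    (hCt : 1944 * CMat^3 ≤ Ctil) (i : ℕ) (hi : 4 ≤ i) {e2 : ℝ}
    (he2 : e2 = Ctil * Real.log i ^ 2 / (i:ℝ)^2) :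
    ENNReal.ofReal (CMat * ((i:ℝ)/e2) ^ ((1:ℝ)/3) * Real.log ((i:ℝ)/e2) ^ ((2:ℝ)/3))
      ≤ ENNReal.ofReal ((i:ℝ)/6) := by
  have hipos : (0:ℝ) < i := by positivity
  have hlog : 1 ≤ Real.log i := log_ge_one' (by omega)
  have hD : (0:ℝ) < Ctil * Real.log i ^ 2 := by nlinarith
  have he2pos : 0 < e2 := by rw [he2]; positivity
  have hr : (i:ℝ)/e2 = (i:ℝ)^3 / (Ctil * Real.log i ^ 2) := by
    rw [he2]
    field_simp
  have hrpos : 0 < (i:ℝ)/e2 := by positivity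
  rcases lt_trichotomy (Real.log ((i:ℝ)/e2)) 0 with hneg | hzero | hpos
  · -- log negative: LHS nonpositive
    have hcos : Real.log ((i:ℝ)/e2) ^ ((2:ℝ)/3)
        = Real.exp (Real.log (Real.log ((i:ℝ)/e2)) * ((2:ℝ)/3)) * Real.cos (((2:ℝ)/3) * Real.pi) := by
      exact Real.rpow_def_of_neg hneg _
    have hcv : Real.cos (((2:ℝ)/3) * Real.pi) = -(1/2) := by
      rw [show ((2:ℝ)/3) * Real.pi = Real.pi - Real.pi/3 by ring, Real.cos_pi_sub,
        Real.cos_pi_div_three]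
    have hle0 : Real.log ((i:ℝ)/e2) ^ ((2:ℝ)/3) ≤ 0 := by
      rw [hcos, hcv]
      have := Real.exp_pos (Real.log (Real.log ((i:ℝ)/e2)) * ((2:ℝ)/3))
      nlinarith
    have : CMat * ((i:ℝ)/e2) ^ ((1:ℝ)/3) * Real.log ((i:ℝ)/e2) ^ ((2:ℝ)/3) ≤ 0 := by
      apply mul_nonpos_of_nonneg_of_nonpos _ hle0
      positivity
    rw [ENNReal.ofReal_eq_zero.2 this]
    exact zero_le
  · rw [hzero, Real.zero_rpow (by norm_num), mul_zero]
    simp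
  · -- main case
    apply ENNReal.ofReal_le_ofReal
    set li := Real.log i with hli
    have hli0 : (0:ℝ) < li := by linarith
    have hratio : (i:ℝ)/e2 ≤ (i:ℝ)^3 := by
      rw [hr]
      apply div_le_self (by positivity)
      nlinarith
    have hlogr : Real.log ((i:ℝ)/e2) ≤ 3 * li := by
      calc Real.log ((i:ℝ)/e2) ≤ Real.log ((i:ℝ)^3) := Real.log_le_log hrpos hratio
        _ = 3 * li := by rw [Real.log_pow]; push_cast; ring
    have hb1 : Real.log ((i:ℝ)/e2) ^ ((2:ℝ)/3) ≤ (3 * li) ^ ((2:ℝ)/3) :=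
      Real.rpow_le_rpow hpos.le hlogr (by norm_num)
    have hb2 : (3 * li) ^ ((2:ℝ)/3) = 3 ^ ((2:ℝ)/3) * li ^ ((2:ℝ)/3) :=
      Real.mul_rpow (by norm_num) hli0.le
    have hcube : ((i:ℝ)^3) ^ ((1:ℝ)/3) = (i:ℝ) := by
      rw [← Real.rpow_natCast (i:ℝ) 3, ← Real.rpow_mul hipos.le]
      norm_num
    have hden : (Ctil * li ^ 2) ^ ((1:ℝ)/3) = Ctil ^ ((1:ℝ)/3) * li ^ ((2:ℝ)/3) := by
      rw [Real.mul_rpow (by linarith) (by positivity)]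
      congr 1
      rw [← Real.rpow_natCast li 2, ← Real.rpow_mul hli0.le]
      norm_num
    have hr13 : ((i:ℝ)/e2) ^ ((1:ℝ)/3) = (i:ℝ) / (Ctil ^ ((1:ℝ)/3) * li ^ ((2:ℝ)/3)) := by
      rw [hr, Real.div_rpow (by positivity) hD.le, hcube, hden]
    set u := Ctil ^ ((1:ℝ)/3) with hu
    set w := li ^ ((2:ℝ)/3) with hw
    have hu0 : 0 < u := Real.rpow_pos_of_pos (by linarith) _
    have hw0 : 0 < w := Real.rpow_pos_of_pos hli0 _
    set c3 := (3:ℝ) ^ ((2:ℝ)/3) with hc3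
    have hc30 : 0 < c3 := Real.rpow_pos_of_pos (by norm_num) _
    have hkey : 6 * c3 * CMat ≤ u := by
      have hcube2 : (6 * c3 * CMat) ^ (3:ℕ) = 1944 * CMat ^ 3 := by
        have : c3 ^ (3:ℕ) = 9 := by
          rw [hc3, ← Real.rpow_natCast ((3:ℝ) ^ ((2:ℝ)/3)) 3, ← Real.rpow_mul (by norm_num)]
          norm_num
        calc (6 * c3 * CMat) ^ (3:ℕ) = 6^(3:ℕ) * c3^(3:ℕ) * CMat^(3:ℕ) := by ring
          _ = 1944 * CMat ^ 3 := by rw [this]; norm_num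
      have h1 : ((6 * c3 * CMat) ^ (3:ℕ) : ℝ) ≤ Ctil := by rw [hcube2]; exact hCt
      have h2 : 6 * c3 * CMat = ((6 * c3 * CMat) ^ (3:ℕ)) ^ ((1:ℝ)/3) := by
        rw [← Real.rpow_natCast (6 * c3 * CMat) 3, ← Real.rpow_mul (by positivity)]
        norm_num
      rw [h2, hu]
      exact Real.rpow_le_rpow (by positivity) h1 (by norm_num)
    calc CMat * ((i:ℝ)/e2) ^ ((1:ℝ)/3) * Real.log ((i:ℝ)/e2) ^ ((2:ℝ)/3)
        ≤ CMat * ((i:ℝ)/e2) ^ ((1:ℝ)/3) * (c3 * w) := by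
          apply mul_le_mul_of_nonneg_left _ (by positivity)
          rw [← hb2]; exact hb1
      _ = CMat * ((i:ℝ) / (u * w)) * (c3 * w) := by rw [hr13]
      _ = CMat * c3 * (i:ℝ) / u := by field_simp
      _ ≤ (i:ℝ)/6 := by
          rw [div_le_div_iff₀ hu0 (by norm_num)]
          calc CMat * c3 * (i:ℝ) * 6 = (6 * c3 * CMat) * (i:ℝ) := by ring
            _ ≤ u * (i:ℝ) := mul_le_mul_of_nonneg_right hkey hipos.le
            _ = (i:ℝ) * u := by ring

lemma count_bound
    (hpsd : ∀ (n : ℕ) (xv : Fin n → X) (c : Fin n → ℝ),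
      0 ≤ ∑ i, ∑ j, c i * c j * k (xv i) (xv j))
    (hsym : ∀ x y : X, k x y = k y x)
    {T : ℕ} (xs : Fin T → X) (i : ℕ) (hi4 : 4 ≤ i) {ε : ℝ} (hε : 0 < ε)
    (hmig : mig k i ε ≤ ENNReal.ofReal ((i:ℝ)/6))
    (hcard : i ≤ (Finset.univ.filter
      fun t => ε < postStd k (pre xs t) (xs t)).card) :
    False := by
  classical
  obtain ⟨S, hSsub, hScard⟩ := Finset.exists_subset_card_eq hcard
  set e := S.orderIsoOfFin hScard with he
  set ys : Fin i → X := fun j => xs ((e j : {x // x ∈ S}) : Fin T) with hys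
  have hvar : ∀ j : Fin i,
      ε ^ 2 < postVar k (fun l : Fin j.1 => ys ⟨l.1, l.2.trans j.2⟩) ε (ys j) := by
    intro j
    set t : Fin T := ((e j : {x // x ∈ S}) : Fin T) with ht
    have htmem : t ∈ Finset.univ.filter
        (fun t => ε < postStd k (pre xs t) (xs t)) := hSsub (e j).2
    have hstd : ε < postStd k (pre xs t) (xs t) :=
      (Finset.mem_filter.mp htmem).2
    have h1 : postStd k (pre xs t) (xs t) ≤ Real.sqrt (postVar k (pre xs t) ε (xs t)) :=
      postStd_le_sqrt _ _ hε
    have h2 : ε ^ 2 < postVar k (pre xs t) ε (xs t) :=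
      (Real.lt_sqrt hε.le).mp (lt_of_lt_of_le hstd h1)
    have hmono : postVar k (pre xs t) ε (xs t)
        ≤ postVar k (fun l : Fin j.1 => ys ⟨l.1, l.2.trans j.2⟩) ε (xs t) := by
      set φ : Fin j.1 → Fin t.1 := fun l =>
        ⟨((e ⟨l.1, l.2.trans j.2⟩ : {x // x ∈ S}) : Fin T).1, by
          have hlt : (⟨l.1, l.2.trans j.2⟩ : Fin i) < j := l.2
          have := (OrderIso.lt_iff_lt e).2 hlt
          exact this⟩ with hφ
      apply postVar_mono hpsd hsym _ _ φ _ _ (ne_of_gt hε)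
      · intro l1 l2 hl
        have h1 : ((e ⟨l1.1, l1.2.trans j.2⟩ : {x // x ∈ S}) : Fin T).1
            = ((e ⟨l2.1, l2.2.trans j.2⟩ : {x // x ∈ S}) : Fin T).1 := by
          have h1' := congrArg Fin.val hl
          exact h1'
        have h2 : (⟨l1.1, l1.2.trans j.2⟩ : Fin i) = ⟨l2.1, l2.2.trans j.2⟩ := by
          apply e.injective
          apply Subtype.ext
          exact Fin.ext h1
        have := congrArg Fin.val h2
        exact Fin.ext this
      · intro l
        show pre xs t (φ l) = ys ⟨l.1, l.2.trans j.2⟩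
        unfold pre
        apply congrArg xs
        apply Fin.ext
        rfl
    have : xs t = ys j := rfl
    rw [this] at h2 hmono
    exact lt_of_lt_of_le h2 hmono
  have hdet := det_lower hpsd hsym ys (ne_of_gt hε) hvar
  have hdet2 : (2:ℝ)^i ≤ (1 + (ε^2)⁻¹ • gram k ys).det := by
    have h1 : (1 + (ε^2)⁻¹ • gram k ys)
        = (ε^2)⁻¹ • (gram k ys + ε^2 • (1 : Matrix (Fin i) (Fin i) ℝ)) := by
      rw [smul_add, smul_smul, inv_mul_cancel₀ (by positivity), one_smul, add_comm]
    rw [h1, Matrix.det_smul, Fintype.card_fin]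
    calc (2:ℝ)^i = ((ε^2)⁻¹)^i * (2*ε^2)^i := by
          rw [← mul_pow]
          congr 1
          field_simp
      _ ≤ _ := mul_le_mul_of_nonneg_left hdet (by positivity)
  have hlogdet : (i:ℝ) * Real.log 2 ≤ Real.log ((1 + (ε^2)⁻¹ • gram k ys).det) := by
    calc (i:ℝ) * Real.log 2 = Real.log ((2:ℝ)^i) := by rw [Real.log_pow]
      _ ≤ _ := Real.log_le_log (by positivity) hdet2
  have hlb : ENNReal.ofReal ((1/2) * ((i:ℝ) * Real.log 2)) ≤ mig k i ε := by
    refine le_trans (ENNReal.ofReal_le_ofReal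
      (mul_le_mul_of_nonneg_left hlogdet (by norm_num : (0:ℝ) ≤ 1/2))) ?_
    show ENNReal.ofReal ((1/2) * Real.log ((1 + (ε^2)⁻¹ • gram k ys).det)) ≤ mig k i ε
    exact le_iSup (fun v : Fin i → X => ENNReal.ofReal
      ((1/2) * Real.log ((1 + (ε^2)⁻¹ • gram k v).det))) ys
  have hchain := le_trans hlb hmig
  have hineq : (1/2) * ((i:ℝ) * Real.log 2) ≤ (i:ℝ)/6 :=
    (ENNReal.ofReal_le_ofReal_iff (by positivity)).mp hchain
  have hipos : (0:ℝ) < i := by positivity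
  have hlog2 : (0.6931471803:ℝ) < Real.log 2 := Real.log_two_gt_d9
  nlinarith

end COUNT

section ANA

lemma log_ge_one {i : ℕ} (hi : 3 ≤ i) : 1 ≤ Real.log i := by
  rw [Real.le_log_iff_exp_le (by positivity)]
  calc Real.exp 1 ≤ 2.7182818286 := (Real.exp_one_lt_d9).le
    _ ≤ 3 := by norm_num
    _ ≤ (i:ℝ) := by exact_mod_cast hi

lemma eps_antitone {c : ℝ} (hc : 0 ≤ c) {i : ℕ} (hi : 3 ≤ i) :
    c * Real.log (↑(i+1)) / (↑(i+1)) ≤ c * Real.log i / i := by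
  have h3 : (3:ℝ) ≤ (i:ℝ) := by exact_mod_cast hi
  have he : Real.exp 1 ≤ (i:ℝ) := by
    calc Real.exp 1 ≤ 2.7182818286 := (Real.exp_one_lt_d9).le
      _ ≤ 3 := by norm_num
      _ ≤ (i:ℝ) := h3
  have he2 : Real.exp 1 ≤ ((i:ℝ)+1) := by linarith
  have key : Real.log ((i:ℝ)+1) / ((i:ℝ)+1) ≤ Real.log i / i :=
    Real.log_div_self_antitoneOn he he2 (by linarith)
  push_cast
  rw [mul_div_assoc, mul_div_assoc]
  exact mul_le_mul_of_nonneg_left key hc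

lemma log_sq_step {a b : ℝ} (ha : 1 ≤ a) (hb : b = a + 1) :
    Real.log b / b ≤ Real.log b ^ 2 - Real.log a ^ 2 := by
  have ha0 : (0:ℝ) < a := by linarith
  have hb0 : (0:ℝ) < b := by rw [hb]; linarith
  have hla : 0 ≤ Real.log a := Real.log_nonneg ha
  have hlab : Real.log a ≤ Real.log b := Real.log_le_log ha0 (by rw [hb]; linarith)
  have hdiff : 1/b ≤ Real.log b - Real.log a := by
    have h1 : Real.log (a/b) ≤ a/b - 1 := Real.log_le_sub_one_of_pos (by positivity)
    have h2 : Real.log (a/b) = Real.log a - Real.log b := Real.log_div (by linarith) (by linarith)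
    have h3 : a/b - 1 = -(1/b) := by
      rw [hb]
      field_simp
      ring
    rw [h2, h3] at h1
    linarith
  have hlb0 : 0 ≤ Real.log b := le_trans hla hlab
  have expand : Real.log b ^ 2 - Real.log a ^ 2
      = (Real.log b - Real.log a) * (Real.log b + Real.log a) := by ring
  rw [expand]
  have h4 : (1/b) * (Real.log b + Real.log a) ≤
      (Real.log b - Real.log a) * (Real.log b + Real.log a) := by
    apply mul_le_mul_of_nonneg_right hdiff (by linarith)
  calc Real.log b / b = (1/b) * Real.log b := by ring
    _ ≤ (1/b) * (Real.log b + Real.log a) := by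
        apply mul_le_mul_of_nonneg_left (by linarith) (by positivity)
    _ ≤ _ := h4

lemma tele_sum (f g : ℕ → ℝ) (a : ℕ) (ha : 1 ≤ a)
    (hstep : ∀ i, a ≤ i → g i ≤ f i - f (i-1)) :
    ∀ b, a ≤ b → ∑ i ∈ Finset.Ico a b, g i ≤ f (b-1) - f (a-1) := by
  intro b hb
  induction b, hb using Nat.le_induction with
  | base => simp
  | succ n hn ih =>
    rw [Finset.sum_Ico_succ_top hn]
    have h1 := hstep n (by omega)
    have h2 : (n+1) - 1 = n := by omega
    rw [h2]
    have h3 : f (n-1) - f (a-1) ≥ ∑ i ∈ Finset.Ico a n, g i := ih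
    -- f (n-1) appears; combine
    have := hstep n hn
    calc ∑ i ∈ Finset.Ico a n, g i + g n ≤ (f (n-1) - f (a-1)) + (f n - f (n-1)) := by
          apply add_le_add ih (hstep n hn)
      _ = f n - f (a-1) := by ring

lemma abel_bound {T : ℕ} (σ : Fin T → ℝ) (ee : ℕ → ℝ) (m : ℕ) (hm : 1 ≤ m)
    (hσ1 : ∀ t, σ t ≤ 1)
    (hmono : ∀ i, m - 1 ≤ i → ee (i+1) ≤ ee i)
    (hcount : ∀ i, m ≤ i →
      ((Finset.univ.filter fun t => ee i < σ t).card : ℝ) ≤ (i:ℝ) - 1) :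
    ∀ n, m ≤ n →
      ∑ t ∈ (Finset.univ.filter fun t => ee n < σ t), σ t
        + ((n:ℝ) - 1 - ((Finset.univ.filter fun t => ee n < σ t).card : ℝ)) * ee (n-1)
      ≤ ((Finset.univ.filter fun t => ee m < σ t).card : ℝ)
        + ((m:ℝ) - 1 - ((Finset.univ.filter fun t => ee m < σ t).card : ℝ)) * ee (m-1)
        + ∑ i ∈ Finset.Ico m n, ee i := by
  intro n hn
  induction n, hn using Nat.le_induction with
  | base =>
    simp only [Finset.Ico_self, Finset.sum_empty, add_zero]
    have hb : ∑ t ∈ (Finset.univ.filter fun t => ee m < σ t), σ t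
        ≤ ((Finset.univ.filter fun t => ee m < σ t).card : ℝ) := by
      calc ∑ t ∈ (Finset.univ.filter fun t => ee m < σ t), σ t
          ≤ ∑ t ∈ (Finset.univ.filter fun t => ee m < σ t), 1 :=
            Finset.sum_le_sum (fun t _ => hσ1 t)
        _ = _ := by simp
    linarith
  | succ n hn ih =>
    set Fn := Finset.univ.filter fun t : Fin T => ee n < σ t with hFn
    set Fn1 := Finset.univ.filter fun t : Fin T => ee (n+1) < σ t with hFn1
    have hsub : Fn ⊆ Fn1 := by
      intro t ht
      simp only [hFn, Finset.mem_filter, Finset.mem_univ, true_and] at ht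
      simp only [hFn1, Finset.mem_filter, Finset.mem_univ, true_and]
      have := hmono n (by omega)
      linarith
    have hsplit : ∑ t ∈ Fn1, σ t = ∑ t ∈ Fn, σ t + ∑ t ∈ Fn1 \ Fn, σ t := by
      rw [← Finset.sum_sdiff hsub]; ring
    have hdiffbd : ∑ t ∈ Fn1 \ Fn, σ t ≤ ((Fn1.card : ℝ) - Fn.card) * ee n := by
      have h1 : ∀ t ∈ Fn1 \ Fn, σ t ≤ ee n := by
        intro t ht
        have ht2 := (Finset.mem_sdiff.mp ht).2
        simp only [hFn, Finset.mem_filter, Finset.mem_univ, true_and, not_lt] at ht2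
        exact ht2
      calc ∑ t ∈ Fn1 \ Fn, σ t ≤ ∑ t ∈ Fn1 \ Fn, ee n := Finset.sum_le_sum h1
        _ = ((Fn1 \ Fn).card : ℝ) * ee n := by rw [Finset.sum_const, nsmul_eq_mul]
        _ = ((Fn1.card : ℝ) - Fn.card) * ee n := by
            rw [Finset.card_sdiff_of_subset hsub, Nat.cast_sub (Finset.card_le_card hsub)]
    have hcn : (Fn.card : ℝ) ≤ (n:ℝ) - 1 := hcount n hn
    have hmono' : ee n ≤ ee (n-1) := by
      have := hmono (n-1) (by omega)
      have hnn : n - 1 + 1 = n := by omega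
      rwa [hnn] at this
    have hIco : ∑ i ∈ Finset.Ico m (n+1), ee i = ∑ i ∈ Finset.Ico m n, ee i + ee n :=
      Finset.sum_Ico_succ_top hn _
    have hn1 : (n+1) - 1 = n := by omega
    rw [hn1, hIco, hsplit]
    have key : ((n:ℝ) + 1 - 1 - (Fn1.card : ℝ)) * ee n + ∑ t ∈ Fn1 \ Fn, σ t
        ≤ ((n:ℝ) - 1 - (Fn.card : ℝ)) * ee (n-1) + ee n := by
      have e1 : ((n:ℝ) + 1 - 1 - (Fn1.card : ℝ)) * ee n + ((Fn1.card : ℝ) - Fn.card) * ee n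
          = ((n:ℝ) - 1 - (Fn.card : ℝ)) * ee n + ee n := by ring
      have e2 : ((n:ℝ) - 1 - (Fn.card : ℝ)) * ee n ≤ ((n:ℝ) - 1 - (Fn.card : ℝ)) * ee (n-1) :=
        mul_le_mul_of_nonneg_left hmono' (by linarith)
      linarith
    push_cast at key ih ⊢
    linarith

end ANA

lemma aux_comb1 {Tr cT e1 e0 : ℝ} (h1 : cT ≤ Tr - 1) (h2 : e1 ≤ e0) (h3 : 0 ≤ e1) :
    (Tr - cT) * e1 ≤ (Tr - 1 - cT) * e0 + e1 := by nlinarith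

lemma aux_comb2 {M cm e : ℝ} (h1 : cm ≤ M) (h2 : e ≤ 1) (h3 : 0 ≤ e) (h4 : 0 ≤ cm) :
    cm + (M - cm) * e ≤ M := by nlinarith

/-- Cumulative posterior standard deviation under a Matérn-type information-gain
bound, case d = ν. -/
theorem sum_postStd_matern_d_eq_nu
{X : Type*} [Nonempty X] (k : X → X → ℝ)
    (hsym : ∀ x y : X, k x y = k y x)
    (hpsd : ∀ (n : ℕ) (xv : Fin n → X) (c : Fin n → ℝ),
      0 ≤ ∑ i, ∑ j, c i * c j * k (xv i) (xv j))
    (hk1 : ∀ x : X, k x x ≤ 1)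
    (CMat lamBar : ℝ) (hCMat : 0 < CMat) (hlamBar : 0 < lamBar)
    (T0 : ℕ) (hT0 : 2 ≤ T0) (d : ℕ) (hd : 1 ≤ d) (ν : ℝ) (hν : 0 < ν)
    (hgain : ∀ lam : ℝ, 0 < lam → lam ≤ lamBar → ∀ t : ℕ, T0 ≤ t →
      mig k t lam ≤ ENNReal.ofReal
        (CMat * ((t : ℝ) / lam ^ 2) ^ ((d : ℝ) / (2 * ν + (d : ℝ))) *
          Real.log ((t : ℝ) / lam ^ 2) ^ (2 * ν / (2 * ν + (d : ℝ)))))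
    (Ctil : ℝ) (hCtil : Ctil = max 1
      ((2 + 2 * ν / (d : ℝ)) ^ (2 * ν / (d : ℝ)) * (6 * CMat) ^ (1 + 2 * ν / (d : ℝ))))
    (Tlam : ℕ) (hTlam : ∀ t : ℕ, Tlam ≤ t →
      Ctil * (t : ℝ) ^ (-(2 * ν / (d : ℝ))) * Real.log (t : ℝ) ^ (2 * ν / (d : ℝ)) ≤ lamBar ^ 2)
    (TMat : ℕ) (hTMat : TMat = max 4 (max T0 Tlam))
    (hdν : (d : ℝ) = ν) :
    ∀ T : ℕ, 0 < T → ∀ xs : Fin T → X,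
      ∑ t : Fin T, postStd k (pre xs t) (xs t) ≤
        (TMat : ℝ) + Real.sqrt Ctil * Real.log (T : ℝ) ^ 2 := by
  classical
  have hd0 : (0:ℝ) < (d:ℝ) := by exact_mod_cast hd
  have hdne : (d:ℝ) ≠ 0 := ne_of_gt hd0
  have hfrac : 2 * ν / (d:ℝ) = 2 := by
    rw [← hdν, mul_div_assoc, div_self hdne, mul_one]
  have h3dne : (3:ℝ)*(d:ℝ) ≠ 0 := by positivity
  have he1exp : (d:ℝ) / (2 * ν + (d:ℝ)) = 1/3 := by
    rw [← hdν, show 2*(d:ℝ) + (d:ℝ) = 3*(d:ℝ) by ring,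
      div_eq_div_iff h3dne (by norm_num : (3:ℝ) ≠ 0)]
    ring
  have he2exp : 2 * ν / (2 * ν + (d:ℝ)) = 2/3 := by
    rw [← hdν, show 2*(d:ℝ) + (d:ℝ) = 3*(d:ℝ) by ring,
      div_eq_div_iff h3dne (by norm_num : (3:ℝ) ≠ 0)]
    ring
  have hCt1 : 1 ≤ Ctil := by rw [hCtil]; exact le_max_left _ _
  have hCt0 : (0:ℝ) < Ctil := by linarith
  have hV : (2 + 2*ν/(d:ℝ)) ^ (2*ν/(d:ℝ)) * (6*CMat) ^ (1 + 2*ν/(d:ℝ)) = 3456 * CMat^3 := by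
    have h4 : (4:ℝ) ^ (2:ℝ) = 16 := by
      rw [show (2:ℝ) = ((2:ℕ):ℝ) by norm_num, Real.rpow_natCast]; norm_num
    have h6 : (6*CMat) ^ (3:ℝ) = 216 * CMat^3 := by
      rw [show (3:ℝ) = ((3:ℕ):ℝ) by norm_num, Real.rpow_natCast]; ring
    rw [hfrac, show ((2:ℝ)+2) = 4 by norm_num, show ((1:ℝ)+2) = 3 by norm_num, h4, h6]
    ring
  have hCt : 1944 * CMat^3 ≤ Ctil := by
    have h1 : 3456 * CMat^3 ≤ Ctil := by
      rw [hCtil, ← hV]; exact le_max_right _ _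
    nlinarith [pow_pos hCMat 3]
  have hTM4 : 4 ≤ TMat := by rw [hTMat]; exact le_max_left _ _
  have hTMT0 : T0 ≤ TMat := by
    rw [hTMat]; exact le_trans (le_max_left _ _) (le_max_right _ _)
  have hTMTl : Tlam ≤ TMat := by
    rw [hTMat]; exact le_trans (le_max_right _ _) (le_max_right _ _)
  intro T hTpos xs
  set σ : Fin T → ℝ := fun t => postStd k (pre xs t) (xs t) with hσdef
  have hσ1 : ∀ t, σ t ≤ 1 := fun t => postStd_le_one hpsd hsym hk1 _ _
  have hσ0 : ∀ t, 0 ≤ σ t := fun t => postStd_nonneg _ _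
  have hrhs0 : 0 ≤ Real.sqrt Ctil * Real.log T ^ 2 := by positivity
  rcases le_or_gt T TMat with hTle | hTgt
  · calc ∑ t : Fin T, σ t ≤ ∑ _t : Fin T, (1:ℝ) := Finset.sum_le_sum (fun t _ => hσ1 t)
      _ = (T:ℝ) := by simp
      _ ≤ (TMat:ℝ) := by exact_mod_cast hTle
      _ ≤ _ := le_add_of_nonneg_right hrhs0
  · set eps : ℕ → ℝ := fun i => Real.sqrt Ctil * Real.log i / i with heps
    set ee : ℕ → ℝ := fun i => min (eps i) 1 with hee
    have hsqrt0 : 0 ≤ Real.sqrt Ctil := Real.sqrt_nonneg _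
    have hsqrt1 : 1 ≤ Real.sqrt Ctil := by
      have := Real.sqrt_le_sqrt hCt1
      rwa [Real.sqrt_one] at this
    have hepspos : ∀ i : ℕ, 4 ≤ i → 0 < eps i := by
      intro i hi
      have h1 : (0:ℝ) < Real.log i := lt_of_lt_of_le one_pos (log_ge_one (by omega))
      have h2 : (0:ℝ) < (i:ℝ) := by positivity
      have h3 : 0 < Real.sqrt Ctil := lt_of_lt_of_le one_pos hsqrt1
      simp only [heps]
      exact div_pos (mul_pos h3 h1) h2
    have hsq : ∀ i : ℕ, eps i ^ 2 = Ctil * Real.log i ^ 2 / (i:ℝ)^2 := by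
      intro i
      simp only [heps]
      rw [div_pow, mul_pow, Real.sq_sqrt (le_of_lt hCt0)]
    have hee0 : ∀ i : ℕ, 1 ≤ i → 0 ≤ ee i := by
      intro i hi
      simp only [hee]
      apply le_min _ (by norm_num)
      simp only [heps]
      apply div_nonneg (mul_nonneg hsqrt0 (Real.log_nonneg (by exact_mod_cast hi)))
        (by positivity)
    have hcount : ∀ i, TMat ≤ i →
        ((Finset.univ.filter fun t => ee i < σ t).card : ℝ) ≤ (i:ℝ) - 1 := by
      intro i hi
      have hi4 : 4 ≤ i := le_trans hTM4 hi
      by_cases hbig : 1 ≤ eps i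
      · have hmin : ee i = 1 := by simp only [hee]; exact min_eq_right hbig
        have hempty : (Finset.univ.filter fun t => ee i < σ t) = ∅ := by
          apply Finset.filter_false_of_mem
          intro t _
          rw [hmin]
          exact not_lt.mpr (hσ1 t)
        rw [hempty]
        have h4 : (4:ℝ) ≤ (i:ℝ) := by exact_mod_cast hi4
        simp only [Finset.card_empty, Nat.cast_zero]
        linarith
      · push_neg at hbig
        have hmin : ee i = eps i := by simp only [hee]; exact min_eq_left hbig.le
        by_contra hcon
        push_neg at hcon
        have hile : i ≤ (Finset.univ.filter fun t => ee i < σ t).card := by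
          have h1 : (i:ℝ) < ((Finset.univ.filter fun t => ee i < σ t).card : ℝ) + 1 := by
            linarith
          have h2 : i < (Finset.univ.filter fun t => ee i < σ t).card + 1 := by
            exact_mod_cast h1
          omega
        have hile2 : i ≤ (Finset.univ.filter
            fun t => eps i < postStd k (pre xs t) (xs t)).card := by
          have heqf : (Finset.univ.filter fun t : Fin T => ee i < σ t)
              = (Finset.univ.filter fun t => eps i < postStd k (pre xs t) (xs t)) := by
            apply Finset.filter_congr
            intro t _
            rw [hmin, hσdef]
          rwa [heqf] at hile
        have hεpos : 0 < eps i := hepspos i hi4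
        have hlam2 : eps i ^ 2 ≤ lamBar ^ 2 := by
          have htl := hTlam i (le_trans hTMTl hi)
          have hrw1 : (i:ℝ) ^ (-(2 * ν / (d:ℝ))) = ((i:ℝ)^2)⁻¹ := by
            rw [hfrac, Real.rpow_neg (by positivity)]
            congr 1
            rw [show (2:ℝ) = ((2:ℕ):ℝ) by norm_num, Real.rpow_natCast]
          have hrw2 : Real.log (i:ℝ) ^ (2 * ν / (d:ℝ)) = Real.log i ^ (2:ℕ) := by
            rw [hfrac, show (2:ℝ) = ((2:ℕ):ℝ) by norm_num, Real.rpow_natCast]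
          rw [hrw1, hrw2] at htl
          rw [hsq i]
          calc Ctil * Real.log i ^ 2 / (i:ℝ)^2
              = Ctil * ((i:ℝ)^2)⁻¹ * Real.log i ^ (2:ℕ) := by ring
            _ ≤ lamBar ^ 2 := htl
        have hlamle : eps i ≤ lamBar := by
          have := Real.sqrt_le_sqrt hlam2
          rwa [Real.sqrt_sq hεpos.le, Real.sqrt_sq hlamBar.le] at this
        have hmig1 := hgain (eps i) hεpos hlamle i (le_trans hTMT0 hi)
        rw [he1exp, he2exp] at hmig1
        have hmig2 := gain_arith hCMat hCt1 hCt i hi4 (hsq i)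
        have hmig : mig k i (eps i) ≤ ENNReal.ofReal ((i:ℝ)/6) := le_trans hmig1 hmig2
        exact count_bound hpsd hsym xs i hi4 hεpos hmig hile2
    have hmono : ∀ i, TMat - 1 ≤ i → ee (i+1) ≤ ee i := by
      intro i hi
      have hi3 : 3 ≤ i := by omega
      simp only [hee]
      apply min_le_min _ le_rfl
      simp only [heps]
      exact eps_antitone hsqrt0 hi3
    have habel := abel_bound σ ee TMat (by omega) hσ1 hmono hcount T (le_of_lt hTgt)
    have hsplit := Finset.sum_filter_add_sum_filter_not Finset.univ
      (fun t : Fin T => ee T < σ t) σ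
    have hcardsplit := Finset.card_filter_add_card_filter_not
      (s := (Finset.univ : Finset (Fin T))) (fun t : Fin T => ee T < σ t)
    have hrest : ∑ t ∈ Finset.univ.filter (fun t : Fin T => ¬ (ee T < σ t)), σ t
        ≤ ((T:ℝ) - ((Finset.univ.filter fun t : Fin T => ee T < σ t).card : ℝ)) * ee T := by
      have h1 : ∀ t ∈ Finset.univ.filter (fun t : Fin T => ¬ (ee T < σ t)), σ t ≤ ee T := by
        intro t ht
        exact not_lt.mp (Finset.mem_filter.mp ht).2
      calc ∑ t ∈ Finset.univ.filter (fun t : Fin T => ¬ (ee T < σ t)), σ t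
          ≤ ∑ _t ∈ Finset.univ.filter (fun t : Fin T => ¬ (ee T < σ t)), ee T :=
            Finset.sum_le_sum h1
        _ = ((Finset.univ.filter (fun t : Fin T => ¬ (ee T < σ t))).card : ℝ) * ee T := by
            rw [Finset.sum_const, nsmul_eq_mul]
        _ = ((T:ℝ) - ((Finset.univ.filter fun t : Fin T => ee T < σ t).card : ℝ)) * ee T := by
            congr 1
            have : (Finset.univ.filter (fun t : Fin T => ¬ (ee T < σ t))).card
                = T - (Finset.univ.filter fun t : Fin T => ee T < σ t).card := by
              have hc := hcardsplit
              rw [Finset.card_univ, Fintype.card_fin] at hc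
              omega
            have hle : (Finset.univ.filter fun t : Fin T => ee T < σ t).card ≤ T := by
              have hc := hcardsplit
              rw [Finset.card_univ, Fintype.card_fin] at hc
              omega
            rw [this, Nat.cast_sub hle]
    have hcountT := hcount T (le_of_lt hTgt)
    have heeT : ee T ≤ ee (T-1) := by
      have h := hmono (T-1) (by omega)
      have h2 : T - 1 + 1 = T := by omega
      rwa [h2] at h
    have hcm := hcount TMat le_rfl
    have heem1 : ee (TMat - 1) ≤ 1 := min_le_right _ _
    have heeT0 : 0 ≤ ee T := hee0 T (by omega)
    have heeTm0 : 0 ≤ ee (TMat-1) := hee0 (TMat-1) (by omega)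
    have hmain : ∑ t : Fin T, σ t
        ≤ ((TMat:ℝ) - 1) + (∑ i ∈ Finset.Ico TMat T, ee i + ee T) := by
      have h2 := aux_comb2 hcm heem1 heeTm0
        (Nat.cast_nonneg (Finset.univ.filter fun t : Fin T => ee TMat < σ t).card)
      have h3 := aux_comb1 hcountT heeT heeT0
      linarith [habel, hsplit.le, hrest, h2, h3]
    have htail : ∑ i ∈ Finset.Ico TMat T, ee i + ee T
        = ∑ i ∈ Finset.Ico TMat (T+1), ee i :=
      (Finset.sum_Ico_succ_top (le_of_lt hTgt) _).symm
    set f : ℕ → ℝ := fun n => Real.sqrt Ctil * Real.log n ^ 2 with hf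
    have hstep : ∀ i, TMat ≤ i → ee i ≤ f i - f (i-1) := by
      intro i hi
      have hi4 : 4 ≤ i := le_trans hTM4 hi
      have hcast : ((i-1 : ℕ):ℝ) = (i:ℝ) - 1 := by
        rw [Nat.cast_sub (by omega : 1 ≤ i)]
        norm_num
      have hstep0 : Real.log (i:ℝ) / (i:ℝ)
          ≤ Real.log (i:ℝ)^2 - Real.log ((i-1:ℕ):ℝ)^2 := by
        apply log_sq_step
        · rw [hcast]
          have h4 : (4:ℝ) ≤ (i:ℝ) := by exact_mod_cast hi4
          linarith
        · rw [hcast]; ring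
      calc ee i ≤ eps i := min_le_left _ _
        _ = Real.sqrt Ctil * (Real.log i / i) := by simp only [heps]; ring
        _ ≤ Real.sqrt Ctil * (Real.log (i:ℝ)^2 - Real.log ((i-1:ℕ):ℝ)^2) :=
            mul_le_mul_of_nonneg_left hstep0 hsqrt0
        _ = f i - f (i-1) := by simp only [hf]; ring
    have htele := tele_sum f ee TMat (by omega) hstep (T+1) (by omega)
    have hT1 : (T+1) - 1 = T := by omega
    rw [hT1] at htele
    have hf0 : 0 ≤ f (TMat - 1) := by simp only [hf]; positivity
    calc ∑ t : Fin T, σ t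
        ≤ ((TMat:ℝ) - 1) + ∑ i ∈ Finset.Ico TMat (T+1), ee i := by
          rw [← htail]; exact hmain
      _ ≤ ((TMat:ℝ) - 1) + (f T - f (TMat - 1)) := by linarith [htele]
      _ ≤ (TMat:ℝ) + Real.sqrt Ctil * Real.log T ^ 2 := by
          have hf0' : 0 ≤ Real.sqrt Ctil * Real.log ((TMat-1:ℕ):ℝ) ^ 2 := by positivity
          simp only [hf]
          linarith [hf0']
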